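/- If 𝒳 ⊆ ℝ^d is nonempty and compact, then the Battling Influencers Game with negative inner product loss ℓ_i(x) = −⟨t_i, w_0 x_0 + ∑_{j=1}^n w_j x_j⟩ has a weakly dominant strategy equilibrium. -/
import Mathlib


open scoped RealInnerProductSpace

noncomputable section

/-- Player `i`'s negative inner product loss in the Battling Influencers Game:
`ℓ_i(x) = −⟨t_i, w_0 x_0 + ∑_{j=1}^n w_j x_j⟩`. -/
def lossIP {d n : ℕ} (w0 : ℝ) (x0 : EuclideanSpace ℝ (Fin d)) (w : Fin n → ℝ)
    (t : Fin n → EuclideanSpace ℝ (Fin d)) (i : Fin n)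
    (x : Fin n → EuclideanSpace ℝ (Fin d)) : ℝ :=
  -⟪t i, w0 • x0 + (∑ j, w j • x j)⟫

/-- If `𝒳` is nonempty and compact, the Battling Influencers Game with negative
inner product loss has a weakly dominant strategy equilibrium: a profile
`x⋆ ∈ 𝒳^n` such that each `x_i⋆` is a best response to every joint action of
the other players. -/
theorem exists_wDSE {d n : ℕ} (X : Set (EuclideanSpace ℝ (Fin d)))
    (hne : X.Nonempty) (hcpt : IsCompact X)
    (w0 : ℝ) (x0 : EuclideanSpace ℝ (Fin d)) (w : Fin n → ℝ)
    (t : Fin n → EuclideanSpace ℝ (Fin d)) :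
    ∃ xstar : Fin n → EuclideanSpace ℝ (Fin d),
      (∀ i, xstar i ∈ X) ∧
        ∀ i : Fin n, ∀ x : Fin n → EuclideanSpace ℝ (Fin d), (∀ j, x j ∈ X) →
          ∀ y ∈ X,
            lossIP w0 x0 w t i (Function.update x i (xstar i))
              ≤ lossIP w0 x0 w t i (Function.update x i y) := by
  have key : ∀ i : Fin n, ∃ z ∈ X, ∀ y ∈ X,
      w i * ⟪t i, y⟫ ≤ w i * ⟪t i, z⟫ := by
    intro i
    have hc : Continuous fun y : EuclideanSpace ℝ (Fin d) => w i * ⟪t i, y⟫ :=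
      continuous_const.mul (continuous_const.inner continuous_id)
    obtain ⟨z, hz, hmax⟩ := hcpt.exists_isMaxOn hne hc.continuousOn
    exact ⟨z, hz, fun y hy => hmax hy⟩
  choose xstar hxX hxmax using key
  refine ⟨xstar, hxX, fun i x hx y hy => ?_⟩
  have hsum : ∀ a : EuclideanSpace ℝ (Fin d),
      (∑ j, w j • Function.update x i a j)
        = w i • a + ∑ j ∈ Finset.univ.erase i, w j • x j := by
    intro a
    rw [← Finset.add_sum_erase _ _ (Finset.mem_univ i)]
    simp only [Function.update_self]
    congr 1
    apply Finset.sum_congr rfl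
    intro j hj
    rw [Function.update_of_ne (Finset.ne_of_mem_erase hj)]
  have h := hxmax i y hy
  simp only [lossIP, hsum, inner_add_right, inner_smul_right, real_inner_smul_right] at *
  linarith

end
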